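/- Let D be the 4×4 matrix over ℕ with rows (0,0,0,0), (1,0,1,1), (0,1,0,0), (0,1,0,0), and let A be the 4×4 matrix over ℕ that is zero everywhere except A₄₂ = 1 (row 4, column 2, in 1-based indexing). Define vectors β, α, α' : ℕ → (Fin 4 → ℕ) by: β(0) = (1,0,0,0), α(0) = α'(0) = (0,0,0,0), and for all n ≥ 0: β(n+1) = D·β(n), α(n+1) = D·α(n) + A·β(n), α'(n+1) = D·α'(n) + D·β(n) (matrix–vector products over ℕ). Let a(n) := Σ_{i} α(n)(i) and a'(n) := Σ_{i} α'(n)(i). Then the sequence n ↦ a(n)/a'(n), viewed in ℝ, converges as n → ∞ to 1/4. -/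

import Mathlib

open Filter

/-- The predecessor matrix of the product of the simple communication protocol (good
receiver) with the send–ack counting DFA. -/
def D4 : Matrix (Fin 4) (Fin 4) ℕ :=
  !![0,0,0,0; 1,0,1,1; 0,1,0,0; 0,1,0,0]

/-- The accepting matrix: zero everywhere except row 4, column 2 (1-based), which is 1. -/
def A4 : Matrix (Fin 4) (Fin 4) ℕ :=
  !![0,0,0,0; 0,0,0,0; 0,0,0,0; 0,1,0,0]

/-- With `β(0) = (1,0,0,0)`, `α(0) = α'(0) = 0`, and the recurrences
`β(n+1) = D·β(n)`, `α(n+1) = D·α(n) + A·β(n)`, `α'(n+1) = D·α'(n) + D·β(n)`,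
setting `a(n) = Σᵢ α(n)(i)` and `a'(n) = Σᵢ α'(n)(i)`, the real sequence
`a(n) / a'(n)` converges to `1/4`. -/
theorem stmt_10 (β α α' : ℕ → Fin 4 → ℕ)
    (hβ0 : β 0 = ![1, 0, 0, 0])
    (hα0 : α 0 = ![0, 0, 0, 0]) (hα'0 : α' 0 = ![0, 0, 0, 0])
    (hβ : ∀ n, β (n + 1) = D4.mulVec (β n))
    (hα : ∀ n, α (n + 1) = D4.mulVec (α n) + A4.mulVec (β n))
    (hα' : ∀ n, α' (n + 1) = D4.mulVec (α' n) + D4.mulVec (β n)) :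
    Tendsto (fun n : ℕ => ((∑ i, α n i : ℕ) : ℝ) / ((∑ i, α' n i : ℕ) : ℝ))
      atTop (nhds (1 / 4)) := by
  -- matrix-vector computation helpers
  have D1 : ∀ t : ℕ, D4.mulVec ![0,t,0,0] = ![0,0,t,t] := by
    intro t; funext i
    fin_cases i <;> simp [D4, Matrix.cons_mulVec, Matrix.cons_dotProduct, Matrix.dotProduct_of_isEmpty]
  have D2 : ∀ p q : ℕ, D4.mulVec ![0,0,p,q] = ![0,p+q,0,0] := by
    intro p q; funext i
    fin_cases i <;> simp [D4, Matrix.cons_mulVec, Matrix.cons_dotProduct, Matrix.dotProduct_of_isEmpty]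
  have A1 : ∀ t : ℕ, A4.mulVec ![0,t,0,0] = ![0,0,0,t] := by
    intro t; funext i
    fin_cases i <;> simp [A4, Matrix.cons_mulVec, Matrix.cons_dotProduct, Matrix.dotProduct_of_isEmpty]
  have A2 : ∀ p q : ℕ, A4.mulVec ![0,0,p,q] = ![0,0,0,0] := by
    intro p q; funext i
    fin_cases i <;> simp [A4, Matrix.cons_mulVec, Matrix.cons_dotProduct, Matrix.dotProduct_of_isEmpty]
  have Vadd : ∀ a b c d e f g h : ℕ,
      (![a,b,c,d] + ![e,f,g,h] : Fin 4 → ℕ) = ![a+e,b+f,c+g,d+h] := by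
    intro a b c d e f g h; funext i; fin_cases i <;> simp
  -- α' n = n • β n
  have hα'n : ∀ n, α' n = n • β n := by
    intro n
    induction n with
    | zero => rw [hα'0, zero_smul]; funext i; fin_cases i <;> rfl
    | succ n ih =>
      rw [hα' n, ih, D4.mulVec_smul, ← hβ n, succ_nsmul]
  -- key closed forms
  have key : ∀ m : ℕ, ∃ p : ℕ, 2 * p = m * 2 ^ m ∧
      β (2*m+1) = ![0, 2^m, 0, 0] ∧ β (2*m+2) = ![0, 0, 2^m, 2^m] ∧
      α (2*m+1) = ![0, p, 0, 0] ∧ α (2*m+2) = ![0, 0, p, p + 2^m] := by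
    intro m
    induction m with
    | zero =>
      refine ⟨0, by norm_num, ?_, ?_, ?_, ?_⟩
      · rw [hβ 0, hβ0]; decide
      · rw [hβ 1, hβ 0, hβ0]; decide
      · rw [hα 0, hα0, hβ0]; decide
      · rw [hα 1, hα 0, hα0, hβ 0, hβ0]; decide
    | succ m ih =>
      obtain ⟨p, hp, hb1, hb2, ha1, ha2⟩ := ih
      refine ⟨2*p + 2^m, ?_, ?_, ?_, ?_, ?_⟩
      · rw [pow_succ]; nlinarith [hp]
      · have e : 2*(m+1)+1 = (2*m+2)+1 := by ring
        rw [e, hβ, hb2, D2, show 2^m + 2^m = 2^(m+1) from by rw [pow_succ]; ring]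
      · have e : 2*(m+1)+2 = (2*(m+1)+1)+1 := rfl
        have e2 : 2*(m+1)+1 = (2*m+2)+1 := by ring
        rw [e, e2, hβ, hβ, hb2, D2, show 2^m + 2^m = 2^(m+1) from by rw [pow_succ]; ring, D1]
      · have e : 2*(m+1)+1 = (2*m+2)+1 := by ring
        rw [e, hα, ha2, hb2, D2, A2, Vadd,
          show 0+0 = 0 from rfl, show p+(p+2^m)+0 = 2*p+2^m from by ring]
      · have e : 2*(m+1)+2 = ((2*m+2)+1)+1 := by ring
        have e2 : 2*(m+1)+1 = (2*m+2)+1 := by ring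
        have ha3 : α (2*m+2+1) = ![0, 2*p + 2^m, 0, 0] := by
          rw [hα, ha2, hb2, D2, A2, Vadd,
            show 0+0 = 0 from rfl, show p+(p+2^m)+0 = 2*p+2^m from by ring]
        have hb3 : β (2*m+2+1) = ![0, 2^(m+1), 0, 0] := by
          rw [hβ, hb2, D2, show 2^m + 2^m = 2^(m+1) from by rw [pow_succ]; ring]
        rw [e, hα, ha3, hb3, D1, A1, Vadd,
          show (0:ℕ)+0 = 0 from rfl, show 2*p+2^m+0 = 2*p+2^m from by ring,
          show 2*p+2^m+2^(m+1) = 2*p+2^m + 2^(m+1) from rfl]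
  -- final limit
  rw [show (1:ℝ)/4 = 1/4 from rfl, tendsto_iff_norm_sub_tendsto_zero]
  apply squeeze_zero' (g := fun n : ℕ => 1/(n:ℝ))
  · filter_upwards with n using norm_nonneg _
  · filter_upwards [eventually_ge_atTop 1] with n hn
    rcases (by omega : n = 2*((n-1)/2)+1 ∨ n = 2*((n-1)/2)+2) with h | h <;>
      set m := (n-1)/2 with hm
    · -- odd case
      obtain ⟨p, hp, hb1, _, ha1, _⟩ := key m
      rw [h]
      have s1 : (∑ i, α (2*m+1) i) = p := by
        rw [ha1]; simp [Fin.sum_univ_four]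
      have s2 : (∑ i, α' (2*m+1) i) = (2*m+1) * 2^m := by
        rw [hα'n, hb1]
        simp [Fin.sum_univ_four]
      rw [s1, s2]
      have hT : (0:ℝ) < (2:ℝ)^m := by positivity
      have hM : (0:ℝ) ≤ (m:ℝ) := Nat.cast_nonneg m
      have hpR : 2 * (p:ℝ) = (m:ℝ) * 2^m := by exact_mod_cast hp
      have hden : ((2*m+1 : ℕ) : ℝ) = 2*(m:ℝ)+1 := by push_cast; ring
      have hden2 : (0:ℝ) < 2*(m:ℝ)+1 := by linarith
      have h1 : (2*(m:ℝ)+1) ≠ 0 := by positivity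
      have h2 : ((2:ℝ)^m) ≠ 0 := by positivity
      have hpe : (p:ℝ) = (m:ℝ)*2^m/2 := by
        rw [eq_div_iff (two_ne_zero)]; linarith [hpR]
      have hval : (p:ℝ) / (((2*m+1) * 2^m : ℕ) : ℝ) - 1/4 = -(1/(4*(2*(m:ℝ)+1))) := by
        push_cast
        rw [hpe]
        field_simp
        ring
      rw [hval, Real.norm_eq_abs, abs_neg, abs_of_nonneg (by positivity)]
      rw [hden]
      rw [div_le_div_iff₀ (by positivity) (by positivity)]
      nlinarith
    · -- even case: ratio is exactly 1/4
      obtain ⟨p, hp, _, hb2, _, ha2⟩ := key m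
      rw [h]
      have s1 : (∑ i, α (2*m+2) i) = 2*p + 2^m := by
        rw [ha2]; simp [Fin.sum_univ_four]; ring
      have s2 : (∑ i, α' (2*m+2) i) = (2*m+2) * (2^m + 2^m) := by
        rw [hα'n, hb2]
        simp [Fin.sum_univ_four]
        ring
      rw [s1, s2]
      have hT : (0:ℝ) < (2:ℝ)^m := by positivity
      have hpR : 2 * (p:ℝ) = (m:ℝ) * 2^m := by exact_mod_cast hp
      have h1 : (2*(m:ℝ)+2) ≠ 0 := by positivity
      have h2 : ((2:ℝ)^m) ≠ 0 := by positivity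
      have hpe : (p:ℝ) = (m:ℝ)*2^m/2 := by
        rw [eq_div_iff (two_ne_zero)]; linarith [hpR]
      have : ((2*p + 2^m : ℕ) : ℝ) / (((2*m+2) * (2^m + 2^m) : ℕ) : ℝ) = 1/4 := by
        push_cast
        rw [hpe]
        rw [div_eq_div_iff (by positivity) (by norm_num)]
        ring
      rw [this]
      simp
      positivity
  · exact tendsto_one_div_atTop_nhds_zero_nat
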